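/- arXiv:1112.2352 — 5 statements merged into one kernel-verified Lean document; each statement's English description precedes it below -/
import Mathlib

section
/- Let ψ ∈ X_U and set G_ψ(u) = u − ψ(u). Then G_ψ is a strictly increasing C¹ bijection from (0,∞) onto ℝ, and the rotated curve ψ̌(v) := (G_ψ^{-1}(√2 v) + ψ(G_ψ^{-1}(√2 v)))/√2 satisfies, for every v ∈ ℝ: (i) ψ̌ is differentiable with ψ̌'(v) = 1 − 2·Φ_U(ψ)(√2 v), and (ii) ψ̌(v) = √2 ∫_{√2 v}^{∞} Φ_U(ψ)(w) dw + v (in particular the integral is finite). -/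
open Real MeasureTheory Set Filter

/-- `G_ψ(u) = u - ψ(u)`. -/
noncomputable def Gpsi (ψ : ℝ → ℝ) (u : ℝ) : ℝ := u - ψ u

/-- The inverse of `G_ψ` on `(0,∞)`. -/
noncomputable def Ginv (ψ : ℝ → ℝ) (v : ℝ) : ℝ := Function.invFunOn (Gpsi ψ) (Set.Ioi 0) v

/-- `Φ_U(ψ)(v) = -ψ'(G_ψ⁻¹(v)) / (1 - ψ'(G_ψ⁻¹(v)))`. -/
noncomputable def PhiU (ψ : ℝ → ℝ) (v : ℝ) : ℝ :=
  -deriv ψ (Ginv ψ v) / (1 - deriv ψ (Ginv ψ v))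

/-- The rotated curve `ψ̌(v) = (G_ψ⁻¹(√2 v) + ψ(G_ψ⁻¹(√2 v)))/√2`. -/
noncomputable def checkPsi (ψ : ℝ → ℝ) (v : ℝ) : ℝ :=
  (Ginv ψ (Real.sqrt 2 * v) + ψ (Ginv ψ (Real.sqrt 2 * v))) / Real.sqrt 2

theorem rotated_curve_properties (ψ : ℝ → ℝ)
    (hpos : ∀ u ∈ Set.Ioi (0:ℝ), 0 < ψ u)
    (hC1 : ContDiffOn ℝ 1 ψ (Set.Ioi 0))
    (hneg : ∀ u ∈ Set.Ioi (0:ℝ), deriv ψ u < 0)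
    (h0 : Tendsto ψ (nhdsWithin 0 (Set.Ioi 0)) atTop)
    (hinf : Tendsto ψ atTop (nhds 0)) :
    StrictMonoOn (Gpsi ψ) (Set.Ioi 0) ∧
    ContDiffOn ℝ 1 (Gpsi ψ) (Set.Ioi 0) ∧
    Set.BijOn (Gpsi ψ) (Set.Ioi 0) Set.univ ∧
    (∀ v : ℝ, HasDerivAt (checkPsi ψ) (1 - 2 * PhiU ψ (Real.sqrt 2 * v)) v) ∧
    (∀ v : ℝ,
      MeasureTheory.IntegrableOn (PhiU ψ) (Set.Ioi (Real.sqrt 2 * v)) ∧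
      checkPsi ψ v = Real.sqrt 2 * (∫ w in Set.Ioi (Real.sqrt 2 * v), PhiU ψ w) + v) := by
  -- pointwise differentiability of ψ on (0,∞)
  have hderivψ : ∀ u ∈ Set.Ioi (0:ℝ), HasDerivAt ψ (deriv ψ u) u := fun u hu =>
    ((hC1.contDiffAt (isOpen_Ioi.mem_nhds hu)).differentiableAt one_ne_zero).hasDerivAt
  have hG' : ∀ u ∈ Set.Ioi (0:ℝ), HasDerivAt (Gpsi ψ) (1 - deriv ψ u) u := fun u hu => by
    exact (hasDerivAt_id u).sub (hderivψ u hu)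
  have hGcont : ContinuousOn (Gpsi ψ) (Set.Ioi 0) := fun u hu =>
    ((hG' u hu).continuousAt).continuousWithinAt
  have hmono : StrictMonoOn (Gpsi ψ) (Set.Ioi 0) := by
    apply strictMonoOn_of_deriv_pos (convex_Ioi 0) hGcont
    intro x hx
    rw [interior_Ioi] at hx
    rw [(hG' x hx).deriv]
    linarith [hneg x hx]
  have hCD : ContDiffOn ℝ 1 (Gpsi ψ) (Set.Ioi 0) := contDiffOn_id.sub hC1
  -- surjectivity via limits and IVT
  have hbot : Tendsto (Gpsi ψ) (nhdsWithin 0 (Set.Ioi 0)) atBot := by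
    have h1 : Tendsto (fun u : ℝ => u) (nhdsWithin 0 (Set.Ioi 0)) (nhds 0) :=
      (continuous_id.tendsto 0).mono_left nhdsWithin_le_nhds
    have h2 : Tendsto (fun u : ℝ => -ψ u) (nhdsWithin 0 (Set.Ioi 0)) atBot :=
      tendsto_neg_atTop_atBot.comp h0
    have h := h1.add_atBot h2; simp only [← sub_eq_add_neg] at h; exact h
  have htop : Tendsto (Gpsi ψ) atTop atTop := by
    have h2 : Tendsto (fun u : ℝ => -ψ u) atTop (nhds 0) := by
      simpa using hinf.neg
    have h := tendsto_id.atTop_add h2; simp only [id, ← sub_eq_add_neg] at h; exact h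
  have hsurj : Set.SurjOn (Gpsi ψ) (Set.Ioi 0) Set.univ := by
    intro y _
    obtain ⟨a, hay, ha0⟩ := ((hbot.eventually (eventually_le_atBot y)).and
      self_mem_nhdsWithin).exists
    obtain ⟨b, hby, hba⟩ := ((htop.eventually (eventually_ge_atTop y)).and
      (eventually_ge_atTop a)).exists
    have hIcc : Set.Icc a b ⊆ Set.Ioi (0:ℝ) := fun x hx => lt_of_lt_of_le ha0 hx.1
    have : y ∈ Gpsi ψ '' Set.Icc a b :=
      intermediate_value_Icc hba (hGcont.mono hIcc) ⟨hay, hby⟩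
    exact (Set.image_mono hIcc) this
  have hGmem : ∀ v : ℝ, Ginv ψ v ∈ Set.Ioi (0:ℝ) := fun v =>
    Function.invFunOn_mem (hsurj (Set.mem_univ v))
  have hGG : ∀ v : ℝ, Gpsi ψ (Ginv ψ v) = v := fun v =>
    Function.invFunOn_eq (hsurj (Set.mem_univ v))
  have hinj := hmono.injOn
  -- continuity of the inverse
  haveI : OrdConnected (Set.Ioi (0:ℝ)) := ordConnected_Ioi
  have hGinvCont : Continuous (Ginv ψ) := by
    let f : Set.Ioi (0:ℝ) → ℝ := fun x => Gpsi ψ x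
    have hf : StrictMono f := fun x y hxy => hmono x.2 y.2 hxy
    have hfs : Function.Surjective f := fun y => by
      obtain ⟨x, hx, hxy⟩ := hsurj (Set.mem_univ y); exact ⟨⟨x, hx⟩, hxy⟩
    let e := StrictMono.orderIsoOfSurjective f hf hfs
    have hcont : Continuous (fun v => (e.symm v : ℝ)) :=
      continuous_subtype_val.comp e.symm.continuous
    have heq : ∀ v, (e.symm v : ℝ) = Ginv ψ v := by
      intro v
      have h1 : f (e.symm v) = v := e.apply_symm_apply v
      exact hinj (e.symm v).2 (hGmem v) (h1.trans (hGG v).symm)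
    simpa only [heq] using hcont
  have hne : ∀ v : ℝ, (1:ℝ) - deriv ψ (Ginv ψ v) ≠ 0 := fun v =>
    ne_of_gt (by linarith [hneg _ (hGmem v)])
  have hGinv' : ∀ v : ℝ, HasDerivAt (Ginv ψ) (1 - deriv ψ (Ginv ψ v))⁻¹ v := fun v =>
    HasDerivAt.of_local_left_inverse hGinvCont.continuousAt (hG' _ (hGmem v)) (hne v)
      (Filter.Eventually.of_forall hGG)
  -- F w := ψ (Ginv ψ w)
  have hF' : ∀ w : ℝ, HasDerivAt (fun w => ψ (Ginv ψ w)) (-(PhiU ψ w)) w := fun w => by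
    have h1 := (hderivψ _ (hGmem w)).comp w (hGinv' w)
    have hval : deriv ψ (Ginv ψ w) * (1 - deriv ψ (Ginv ψ w))⁻¹ = -(PhiU ψ w) := by
      rw [PhiU]
      field_simp
    exact hval ▸ h1
  have hGinvMono : Monotone (Ginv ψ) := by
    intro v w hvw
    by_contra h
    push_neg at h
    have := hmono (hGmem w) (hGmem v) h
    rw [hGG, hGG] at this
    exact absurd hvw (not_le_of_gt this)
  have hGinvTop : Tendsto (Ginv ψ) atTop atTop := by
    apply tendsto_atTop_atTop_of_monotone hGinvMono
    intro b
    refine ⟨Gpsi ψ (max b 1), ?_⟩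
    have hmem : max b 1 ∈ Set.Ioi (0:ℝ) := Set.mem_Ioi.mpr (lt_of_lt_of_le one_pos (le_max_right _ _))
    have heq : Ginv ψ (Gpsi ψ (max b 1)) = max b 1 := hinj (hGmem _) hmem (hGG _)
    rw [heq]
    exact le_max_left _ _
  have hFtop : Tendsto (fun w => ψ (Ginv ψ w)) atTop (nhds 0) := hinf.comp hGinvTop
  have hPhiNonneg : ∀ w : ℝ, 0 ≤ PhiU ψ w := fun w => by
    have hd := hneg _ (hGmem w)
    exact div_nonneg (by linarith) (by linarith)
  have hnegF' : ∀ w : ℝ, HasDerivAt (fun w => -ψ (Ginv ψ w)) (PhiU ψ w) w := fun w => by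
    have h := (hF' w).neg; rw [neg_neg] at h; exact h
  have hnegFtop : Tendsto (fun w => -ψ (Ginv ψ w)) atTop (nhds 0) := by
    simpa using hFtop.neg
  have hInt : ∀ a : ℝ, MeasureTheory.IntegrableOn (PhiU ψ) (Set.Ioi a) := fun a =>
    MeasureTheory.integrableOn_Ioi_deriv_of_nonneg
      (hnegF' a).continuousAt.continuousWithinAt
      (fun x _ => hnegF' x) (fun x _ => hPhiNonneg x) hnegFtop
  have hIntEq : ∀ a : ℝ, (∫ w in Set.Ioi a, PhiU ψ w) = ψ (Ginv ψ a) := fun a => by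
    have := MeasureTheory.integral_Ioi_of_hasDerivAt_of_tendsto
      (hnegF' a).continuousAt.continuousWithinAt
      (fun x _ => hnegF' x) (hInt a) hnegFtop
    simpa using this
  have h2ne : (Real.sqrt 2 : ℝ) ≠ 0 := by positivity
  have hsq : Real.sqrt 2 * Real.sqrt 2 = 2 := Real.mul_self_sqrt (by norm_num)
  -- derivative of checkPsi
  have hcheck' : ∀ v : ℝ, HasDerivAt (checkPsi ψ) (1 - 2 * PhiU ψ (Real.sqrt 2 * v)) v := by
    intro v
    have hmul : HasDerivAt (fun v : ℝ => Real.sqrt 2 * v) (Real.sqrt 2) v := by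
      simpa using (hasDerivAt_id v).const_mul (Real.sqrt 2)
    have hg : HasDerivAt (fun v : ℝ => Ginv ψ (Real.sqrt 2 * v))
        ((1 - deriv ψ (Ginv ψ (Real.sqrt 2 * v)))⁻¹ * Real.sqrt 2) v :=
      (hGinv' (Real.sqrt 2 * v)).comp v hmul
    have hpsig : HasDerivAt (fun v : ℝ => ψ (Ginv ψ (Real.sqrt 2 * v)))
        (deriv ψ (Ginv ψ (Real.sqrt 2 * v)) *
          ((1 - deriv ψ (Ginv ψ (Real.sqrt 2 * v)))⁻¹ * Real.sqrt 2)) v :=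
      (hderivψ _ (hGmem (Real.sqrt 2 * v))).comp v hg
    have hsum := (hg.add hpsig).div_const (Real.sqrt 2)
    have hval : ((1 - deriv ψ (Ginv ψ (Real.sqrt 2 * v)))⁻¹ * Real.sqrt 2 +
        deriv ψ (Ginv ψ (Real.sqrt 2 * v)) *
          ((1 - deriv ψ (Ginv ψ (Real.sqrt 2 * v)))⁻¹ * Real.sqrt 2)) / Real.sqrt 2 =
        1 - 2 * PhiU ψ (Real.sqrt 2 * v) := by
      rw [PhiU]
      field_simp [hne (Real.sqrt 2 * v)]
      ring
    rw [← hval]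
    exact hsum
  refine ⟨hmono, hCD, ⟨fun x _ => Set.mem_univ _, hinj, hsurj⟩, hcheck', fun v => ⟨hInt _, ?_⟩⟩
  rw [hIntEq]
  have hx : Ginv ψ (Real.sqrt 2 * v) = Real.sqrt 2 * v + ψ (Ginv ψ (Real.sqrt 2 * v)) := by
    have h1 := hGG (Real.sqrt 2 * v)
    rw [Gpsi] at h1
    linarith
  rw [checkPsi,
    show Ginv ψ (Real.sqrt 2 * v) + ψ (Ginv ψ (Real.sqrt 2 * v)) =
      Real.sqrt 2 * v + 2 * ψ (Ginv ψ (Real.sqrt 2 * v)) by linarith [hx],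
    div_eq_iff h2ne]
  linear_combination (-(ψ (Ginv ψ (Real.sqrt 2 * v)))) * hsq
end

section
/- Let ρ: ℝ → (0,1) be continuous with ∫_{−∞}^{0} (1−ρ(w)) dw < ∞ and ∫_{0}^{∞} ρ(w) dw < ∞, and assume the particle–hole symmetry ρ(−w) = 1 − ρ(w) for all w ∈ ℝ. Let ζ(v) = ∫_{−∞}^{v} (1−ρ(w)) dw, ψ(u) = ∫_{ζ^{-1}(u)}^{∞} ρ(w) dw, ρ_U(u) = −ψ'(u). Then: (i) ζ^{-1}(u) = u − ψ(u) for every u > 0; and (ii) for every measurable Ψ̄: ℝ → ℝ, setting Ψ(u) = Ψ̄(ζ^{-1}(u)) / (1 − ρ(ζ^{-1}(u))), one has for every r > 0 the identity ∫_{ℝ} Ψ̄(v)² e^{−2r|v|} dv = ∫_{0}^{∞} Ψ(u)² e^{−2r|u − ψ(u)|} / (1 + ρ_U(u)) du (both sides possibly equal to +∞ simultaneously). -/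
open Real MeasureTheory Set Filter Topology

/-- `ζ(v) = ∫_{-∞}^v (1 - ρ(w)) dw`. -/
noncomputable def zetaFn (ρ : ℝ → ℝ) (v : ℝ) : ℝ := ∫ w in Set.Iic v, (1 - ρ w)

/-- The inverse of `ζ`. -/
noncomputable def zetaInv (ρ : ℝ → ℝ) (u : ℝ) : ℝ := Function.invFun (zetaFn ρ) u

/-- `ψ(u) = ∫_{ζ⁻¹(u)}^∞ ρ(w) dw`. -/
noncomputable def psiOf (ρ : ℝ → ℝ) (u : ℝ) : ℝ := ∫ w in Set.Ioi (zetaInv ρ u), ρ w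

/-- `ρ_U(u) = -ψ'(u)`. -/
noncomputable def rhoUOf (ρ : ℝ → ℝ) (u : ℝ) : ℝ := -deriv (psiOf ρ) u

/-- 1-D lintegral change of variables. -/
theorem lintegral_image_eq_lintegral_abs_deriv_mul' {s : Set ℝ} {f : ℝ → ℝ} {f' : ℝ → ℝ}
    (hs : MeasurableSet s) (hf' : ∀ x ∈ s, HasDerivWithinAt f (f' x) s x)
    (hf : Set.InjOn f s) (g : ℝ → ENNReal) :
    ∫⁻ x in f '' s, g x = ∫⁻ x in s, ENNReal.ofReal |f' x| * g (f x) := by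
  simpa only [ContinuousLinearMap.det_toSpanSingleton] using
    MeasureTheory.lintegral_image_eq_lintegral_abs_det_fderiv_mul volume hs
      (fun x hx => (hf' x hx).hasFDerivWithinAt) hf g

theorem norm_identity_under_symmetry (ρ : ℝ → ℝ) (hcont : Continuous ρ)
    (hrange : ∀ w, ρ w ∈ Set.Ioo (0:ℝ) 1)
    (hint1 : MeasureTheory.IntegrableOn (fun w => 1 - ρ w) (Set.Iic 0))
    (hint2 : MeasureTheory.IntegrableOn ρ (Set.Ioi 0))
    (hsym : ∀ w : ℝ, ρ (-w) = 1 - ρ w) :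
    (∀ u > (0:ℝ), zetaInv ρ u = u - psiOf ρ u) ∧
    (∀ Ψbar : ℝ → ℝ, Measurable Ψbar → ∀ r > (0:ℝ),
      (∫⁻ v : ℝ, ENNReal.ofReal ((Ψbar v) ^ 2 * Real.exp (-2 * r * |v|)))
        = ∫⁻ u in Set.Ioi (0:ℝ),
            ENNReal.ofReal ((Ψbar (zetaInv ρ u) / (1 - ρ (zetaInv ρ u))) ^ 2
              * Real.exp (-2 * r * |u - psiOf ρ u|) / (1 + rhoUOf ρ u))) := by
  set f : ℝ → ℝ := fun w => 1 - ρ w with hf_def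
  have hfc : Continuous f := continuous_const.sub hcont
  have hfpos : ∀ w, 0 < f w := fun w => by have := (hrange w).2; simp [hf_def]; linarith
  have hρpos : ∀ w, 0 < ρ w := fun w => (hrange w).1
  -- integrability of f on every Iic v
  have h_int_Iic : ∀ v : ℝ, IntegrableOn f (Iic v) := by
    intro v
    rcases le_total v 0 with h | h
    · exact hint1.mono_set (Iic_subset_Iic.2 h)
    · have : Iic v = Iic 0 ∪ Ioc 0 v := by
        rw [Iic_union_Ioc_eq_Iic h]
      rw [this]
      exact hint1.union ((hfc.integrableOn_Icc).mono_set Ioc_subset_Icc_self)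
  have h_int_Ioi : ∀ v : ℝ, IntegrableOn ρ (Ioi v) := by
    intro v
    rcases le_total 0 v with h | h
    · exact hint2.mono_set (Ioi_subset_Ioi h)
    · have : Ioi v = Ioc v 0 ∪ Ioi 0 := by
        rw [Ioc_union_Ioi_eq_Ioi h]
      rw [this]
      exact ((hcont.integrableOn_Icc).mono_set Ioc_subset_Icc_self).union hint2
  -- reflection identity
  have hzeta_eq : ∀ v : ℝ, zetaFn ρ v = ∫ w in Ioi (-v), ρ w := by
    intro v
    rw [zetaFn]
    simp_rw [← hsym]
    exact integral_comp_neg_Iic v ρ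
  -- derivative of ζ
  have hzeta_deriv : ∀ v : ℝ, HasDerivAt (zetaFn ρ) (f v) v := by
    intro v
    have heq : zetaFn ρ = fun x => zetaFn ρ 0 + ∫ w in (0:ℝ)..x, f w := by
      funext x
      rw [zetaFn, zetaFn]
      have := intervalIntegral.integral_Iic_sub_Iic (h_int_Iic 0) (h_int_Iic x)
        (f := f) (μ := volume)
      simp only [hf_def] at this ⊢
      linarith
    rw [heq]
    have hii : IntervalIntegrable f volume 0 v := hfc.intervalIntegrable 0 v
    exact ((intervalIntegral.integral_hasDerivAt_right hii
      (hfc.stronglyMeasurableAtFilter _ _) hfc.continuousAt)).const_add _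
  have hzeta_cont : Continuous (zetaFn ρ) :=
    continuous_iff_continuousAt.2 fun v => (hzeta_deriv v).continuousAt
  have hzeta_mono : StrictMono (zetaFn ρ) := by
    apply strictMono_of_deriv_pos
    intro v
    rw [(hzeta_deriv v).deriv]
    exact hfpos v
  -- ∫_{Ioi a} ρ - ∫_{Ioi b} ρ = ∫_a^b ρ
  have hIoi_sub : ∀ a b : ℝ, (∫ w in Ioi a, ρ w) - (∫ w in Ioi b, ρ w) = ∫ w in a..b, ρ w := by
    have key : ∀ a b : ℝ, a ≤ b →
        (∫ w in Ioi a, ρ w) - (∫ w in Ioi b, ρ w) = ∫ w in a..b, ρ w := by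
      intro a b hab
      rw [intervalIntegral.integral_of_le hab]
      have hsplit : Ioi a = Ioc a b ∪ Ioi b := (Ioc_union_Ioi_eq_Ioi hab).symm
      rw [hsplit, MeasureTheory.setIntegral_union (Ioc_disjoint_Ioi le_rfl) measurableSet_Ioi
        ((h_int_Ioi a).mono_set (by rw [hsplit]; exact subset_union_left)) (h_int_Ioi b)]
      ring
    intro a b
    rcases le_total a b with h | h
    · exact key a b h
    · rw [intervalIntegral.integral_symm, ← key b a h]; ring
  -- ∫_{-v}^{v} ρ = v
  have hhalf : ∀ v : ℝ, (∫ w in (-v)..v, ρ w) = v := by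
    intro v
    have h1 : (∫ w in (-v)..v, ρ (-w)) = ∫ w in (-v)..v, ρ w := by
      rw [intervalIntegral.integral_comp_neg ρ]
      simp
    have h2 : (∫ w in (-v)..v, (ρ w + ρ (-w))) = 2 * v := by
      have hone : (fun w => ρ w + ρ (-w)) = fun _ => (1:ℝ) := by
        funext w; rw [hsym]; ring
      rw [hone, intervalIntegral.integral_const]
      simp
      ring
    have hii : IntervalIntegrable ρ volume (-v) v := hcont.intervalIntegrable _ _
    have hii2 : IntervalIntegrable (fun w => ρ (-w)) volume (-v) v :=
      (hcont.comp continuous_neg).intervalIntegrable _ _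
    rw [intervalIntegral.integral_add hii hii2, h1] at h2
    linarith
  -- key identity
  have hkey : ∀ v : ℝ, zetaFn ρ v - (∫ w in Ioi v, ρ w) = v := by
    intro v
    rw [hzeta_eq v, hIoi_sub (-v) v, hhalf]
  -- ζ ≥ id and ζ > 0
  have hzeta_ge : ∀ v : ℝ, v ≤ zetaFn ρ v := by
    intro v
    have := hkey v
    have hpos : 0 ≤ ∫ w in Ioi v, ρ w :=
      MeasureTheory.setIntegral_nonneg measurableSet_Ioi (fun w _ => (hρpos w).le)
    linarith
  have hzeta_pos : ∀ v : ℝ, 0 < zetaFn ρ v := by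
    intro v
    rw [hzeta_eq v]
    have h1 : (∫ w in (-v)..(-v+1), ρ w) ≤ ∫ w in Ioi (-v), ρ w := by
      rw [intervalIntegral.integral_of_le (by linarith)]
      apply MeasureTheory.setIntegral_mono_set (h_int_Ioi (-v))
        (Filter.Eventually.of_forall fun w => (hρpos w).le)
      exact Filter.Eventually.of_forall (fun w hw => hw.1)
    have h2 : 0 < ∫ w in (-v)..(-v+1), ρ w :=
      intervalIntegral.intervalIntegral_pos_of_pos_on (hcont.intervalIntegrable _ _)
        (fun x _ => hρpos x) (by linarith)
    linarith
  -- ζ tends to 0 at -∞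
  have hzeta_bot : Tendsto (zetaFn ρ) atBot (𝓝 0) := by
    have h1 : Tendsto (fun a : ℝ => ∫ w in a..0, f w) atBot (𝓝 (∫ w in Iic 0, f w)) :=
      MeasureTheory.intervalIntegral_tendsto_integral_Iic 0 hint1 tendsto_id
    have h2 : ∀ a : ℝ, zetaFn ρ a = zetaFn ρ 0 - ∫ w in a..0, f w := by
      intro a
      have := intervalIntegral.integral_Iic_sub_Iic (h_int_Iic a) (h_int_Iic 0)
        (f := f) (μ := volume)
      rw [zetaFn, zetaFn]
      simp only [hf_def] at this ⊢
      linarith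
    rw [show zetaFn ρ = fun a => zetaFn ρ 0 - ∫ w in a..0, f w from funext h2]
    have h0 : zetaFn ρ 0 = ∫ w in Iic 0, f w := by simp only [hf_def, zetaFn]
    have h3 : Tendsto (fun a : ℝ => zetaFn ρ 0 - ∫ w in a..0, f w) atBot
        (𝓝 (zetaFn ρ 0 - ∫ w in Iic 0, f w)) := tendsto_const_nhds.sub h1
    rw [← h0, sub_self] at h3
    exact h3
  -- surjectivity onto Ioi 0
  have hzeta_surj : ∀ u : ℝ, 0 < u → ∃ v, zetaFn ρ v = u := by
    intro u hu
    obtain ⟨a, ha⟩ : ∃ a : ℝ, zetaFn ρ a < u := by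
      have := hzeta_bot.eventually (eventually_lt_nhds hu)
      exact this.exists
    have hb : u ≤ zetaFn ρ u := hzeta_ge u
    have hab : a ≤ u := by
      by_contra h
      push_neg at h
      exact absurd (hzeta_mono.le_iff_le.2 h.le) (by linarith [hzeta_ge u])
    obtain ⟨v, _, hv⟩ := intermediate_value_Icc hab (hzeta_cont.continuousOn)
      (⟨ha.le, hb⟩ : u ∈ Icc (zetaFn ρ a) (zetaFn ρ u))
    exact ⟨v, hv⟩
  have hrange_zeta : Set.range (zetaFn ρ) = Ioi 0 := by
    ext u
    constructor
    · rintro ⟨v, rfl⟩; exact hzeta_pos v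
    · intro hu; exact hzeta_surj u hu
  have hinv : ∀ v : ℝ, zetaInv ρ (zetaFn ρ v) = v :=
    fun v => Function.leftInverse_invFun hzeta_mono.injective v
  have hinv' : ∀ u : ℝ, 0 < u → zetaFn ρ (zetaInv ρ u) = u := by
    intro u hu
    exact Function.invFun_eq (hzeta_surj u hu)
  -- Part (i)
  have part1 : ∀ u > (0:ℝ), zetaInv ρ u = u - psiOf ρ u := by
    intro u hu
    have := hkey (zetaInv ρ u)
    rw [hinv' u hu] at this
    rw [psiOf]
    linarith
  refine ⟨part1, ?_⟩
  -- continuity of zetaInv on Ioi 0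
  have hcontinv : ∀ u : ℝ, 0 < u → ContinuousAt (zetaInv ρ) u := by
    intro u hu
    rw [ContinuousAt]
    rw [tendsto_order]
    constructor
    · intro b hb
      have hbu : zetaFn ρ b < u := by
        rw [← hinv' u hu]
        exact hzeta_mono hb
      have hmem : Ioi (max (zetaFn ρ b) 0) ∈ 𝓝 u :=
        Ioi_mem_nhds (max_lt hbu hu)
      filter_upwards [hmem] with x hx
      have hx0 : 0 < x := lt_of_le_of_lt (le_max_right _ _) hx
      have : zetaFn ρ b < zetaFn ρ (zetaInv ρ x) := by
        rw [hinv' x hx0]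
        exact lt_of_le_of_lt (le_max_left _ _) hx
      exact hzeta_mono.lt_iff_lt.1 this
    · intro b hb
      have hbu : u < zetaFn ρ b := by
        rw [← hinv' u hu]
        exact hzeta_mono hb
      have hmem : Iio (zetaFn ρ b) ∩ Ioi 0 ∈ 𝓝 u :=
        Filter.inter_mem (Iio_mem_nhds hbu) (Ioi_mem_nhds hu)
      filter_upwards [hmem] with x hx
      have : zetaFn ρ (zetaInv ρ x) < zetaFn ρ b := by
        rw [hinv' x hx.2]
        exact hx.1
      exact hzeta_mono.lt_iff_lt.1 this
  -- derivative of zetaInv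
  have hinv_deriv : ∀ u : ℝ, 0 < u →
      HasDerivAt (zetaInv ρ) (f (zetaInv ρ u))⁻¹ u := by
    intro u hu
    apply HasDerivAt.of_local_left_inverse (hcontinv u hu)
      (hzeta_deriv (zetaInv ρ u)) (ne_of_gt (hfpos _))
    filter_upwards [Ioi_mem_nhds hu] with x hx
    exact hinv' x hx
  -- derivative of psiOf
  have hpsi_deriv : ∀ u : ℝ, 0 < u →
      HasDerivAt (psiOf ρ) (1 - (f (zetaInv ρ u))⁻¹) u := by
    intro u hu
    have heq : psiOf ρ =ᶠ[𝓝 u] fun x => id x - zetaInv ρ x := by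
      filter_upwards [Ioi_mem_nhds hu] with x hx
      have := part1 x hx
      simp only [id]
      linarith
    exact HasDerivAt.congr_of_eventuallyEq
      ((hasDerivAt_id u).sub (hinv_deriv u hu)) heq
  have hrhoU : ∀ u : ℝ, 0 < u →
      1 + rhoUOf ρ u = (f (zetaInv ρ u))⁻¹ := by
    intro u hu
    rw [rhoUOf, (hpsi_deriv u hu).deriv]
    ring
  -- Part (ii)
  intro Ψbar _ r _
  have himg : zetaFn ρ '' Set.univ = Ioi 0 := by
    rw [Set.image_univ, hrange_zeta]
  have hchg := lintegral_image_eq_lintegral_abs_deriv_mul' (s := Set.univ)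
    (f := zetaFn ρ) (f' := fun x => f x) MeasurableSet.univ
    (fun x _ => (hzeta_deriv x).hasDerivWithinAt) (hzeta_mono.injective.injOn)
    (fun u => ENNReal.ofReal ((Ψbar (zetaInv ρ u) / (1 - ρ (zetaInv ρ u))) ^ 2
      * Real.exp (-2 * r * |u - psiOf ρ u|) / (1 + rhoUOf ρ u)))
  rw [himg] at hchg
  rw [hchg, MeasureTheory.Measure.restrict_univ]
  apply MeasureTheory.lintegral_congr
  intro x
  have hx0 : 0 < zetaFn ρ x := hzeta_pos x
  have hxi : zetaInv ρ (zetaFn ρ x) = x := hinv x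
  have hpsix : psiOf ρ (zetaFn ρ x) = ∫ w in Ioi x, ρ w := by
    rw [psiOf, hxi]
  have habs : zetaFn ρ x - psiOf ρ (zetaFn ρ x) = x := by
    rw [hpsix]; exact hkey x
  have h1r : 1 + rhoUOf ρ (zetaFn ρ x) = (f x)⁻¹ := by
    rw [hrhoU _ hx0, hxi]
  have hfx : 0 < f x := hfpos x
  rw [hxi, habs, h1r]
  have : (1 : ℝ) - ρ x = f x := rfl
  rw [this]
  rw [← ENNReal.ofReal_mul (abs_nonneg _), abs_of_pos hfx]
  congr 1
  field_simp
end

section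
/- Fix α > 0 and let ψ ∈ X_U with ρ_Uψ := −ψ'. Assume there exist C₁ ≥ C₂ > 0 such that C₂·ρ_U^∞(u) ≤ ρ_Uψ(u) ≤ C₁·ρ_U^∞(u) for all u > 0, and that limsup_{u↓0} |ρ_Uψ(u) − ρ_U^∞(u)| < ∞. Then there exist constants C̃₁ ≥ C̃₂ > 0 such that ρ^∞(v;C̃₂) ≤ Φ_U(ψ)(v) ≤ ρ^∞(v;C̃₁) for all v ∈ ℝ. -/
open Real MeasureTheory Set Filter

/-- `ρ_U^∞(u) = 1/(e^{αu} - 1)`. -/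
noncomputable def rhoUInf (α u : ℝ) : ℝ := 1 / (Real.exp (α * u) - 1)

/-- `ρ^∞(v; C) = C/(e^{αv} + C)`. -/
noncomputable def rhoInf (α v C : ℝ) : ℝ := C / (Real.exp (α * v) + C)


noncomputable def psiInf (α u : ℝ) : ℝ := -(1/α) * Real.log (1 - Real.exp (-(α*u)))

lemma aux_exp_lt_one {α u : ℝ} (hα : 0 < α) (hu : 0 < u) : Real.exp (-(α*u)) < 1 := by
  rw [Real.exp_lt_one_iff]; nlinarith

lemma aux_one_sub_pos {α u : ℝ} (hα : 0 < α) (hu : 0 < u) : 0 < 1 - Real.exp (-(α*u)) := by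
  linarith [aux_exp_lt_one hα hu]

lemma aux_expm1_pos {α u : ℝ} (hα : 0 < α) (hu : 0 < u) : 0 < Real.exp (α*u) - 1 := by
  have : (1:ℝ) < Real.exp (α*u) := by
    rw [show (1:ℝ) = Real.exp 0 by simp]; exact Real.exp_lt_exp.2 (by positivity)
  linarith

lemma psiInf_pos {α u : ℝ} (hα : 0 < α) (hu : 0 < u) : 0 < psiInf α u := by
  have h1 := aux_one_sub_pos hα hu
  have h2 : Real.log (1 - Real.exp (-(α*u))) < 0 :=
    Real.log_neg h1 (by linarith [Real.exp_pos (-(α*u))])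
  have : 0 < 1/α := by positivity
  unfold psiInf; nlinarith

lemma psiInf_hasDerivAt {α u : ℝ} (hα : 0 < α) (hu : 0 < u) :
    HasDerivAt (psiInf α) (-(rhoUInf α u)) u := by
  have h1 : HasDerivAt (fun u => 1 - Real.exp (-(α*u))) (α * Real.exp (-(α*u))) u := by
    have : HasDerivAt (fun u : ℝ => -(α*u)) (-α) u := by
      have h := ((hasDerivAt_id u).const_mul α).neg; rw [mul_one] at h; exact h
    have h := (this.exp).const_sub 1
    refine h.congr_deriv ?_; ring
  have h2 := (h1.log (ne_of_gt (aux_one_sub_pos hα hu))).const_mul (-(1/α))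
  refine h2.congr_deriv (Eq.symm ?_)
  have hne := (aux_one_sub_pos hα hu).ne'
  have hne2 := (aux_expm1_pos hα hu).ne'
  have hE : Real.exp (α*u) * Real.exp (-(α*u)) = 1 := by
    rw [← Real.exp_add]; simp
  unfold rhoUInf
  field_simp
  nlinarith [Real.exp_pos (α*u), Real.exp_pos (-(α*u))]

lemma psiInf_anti {α : ℝ} (hα : 0 < α) {u t : ℝ} (hu : 0 < u) (hut : u ≤ t) :
    psiInf α t ≤ psiInf α u := by
  unfold psiInf
  have h1 := aux_one_sub_pos hα hu
  have hle : Real.log (1 - Real.exp (-(α*u))) ≤ Real.log (1 - Real.exp (-(α*t))) := by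
    apply Real.log_le_log h1
    have : Real.exp (-(α*t)) ≤ Real.exp (-(α*u)) := by
      apply Real.exp_le_exp.2; nlinarith
    linarith
  have : 0 < 1/α := by positivity
  nlinarith

lemma psiInf_tendsto {α : ℝ} (hα : 0 < α) : Tendsto (psiInf α) atTop (nhds 0) := by
  have hmul : Tendsto (fun u : ℝ => α * u) atTop atTop := by
    simpa using tendsto_id.const_mul_atTop hα
  have h1 : Tendsto (fun u : ℝ => -(α*u)) atTop atBot :=
    tendsto_neg_atTop_atBot.comp hmul
  have h2 : Tendsto (fun u : ℝ => 1 - Real.exp (-(α*u))) atTop (nhds 1) := by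
    have := Real.tendsto_exp_atBot.comp h1
    simpa using (tendsto_const_nhds.sub this)
  have h3 : Tendsto (fun u : ℝ => Real.log (1 - Real.exp (-(α*u)))) atTop (nhds 0) := by
    have := (Real.continuousAt_log (x := 1) one_ne_zero).tendsto.comp h2
    rw [Real.log_one] at this; exact this
  have h4 := h3.const_mul (-(1/α))
  simp only [mul_zero] at h4
  exact h4

lemma ratio_eq {E c : ℝ} (hE : 0 < E) (hc : 0 < c) :
    c / (E + c) = (c/E) / (1 + c/E) := by
  have h1 : E + c ≠ 0 := by positivity
  have h2 : 1 + c/E ≠ 0 := by positivity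
  field_simp

lemma ratio_mono {a b : ℝ} (ha : 0 ≤ a) (hab : a ≤ b) : a/(1+a) ≤ b/(1+b) := by
  rw [div_le_div_iff₀ (by linarith) (by linarith)]; nlinarith

lemma exp_key {α u : ℝ} (hα : 0 < α) (hu : 0 < u) :
    Real.exp (α*u) - 1 = Real.exp (α*u - α * psiInf α u) := by
  have h1 := aux_one_sub_pos hα hu
  have : α * psiInf α u = - Real.log (1 - Real.exp (-(α*u))) := by
    unfold psiInf; field_simp
  rw [this, sub_neg_eq_add, Real.exp_add, Real.exp_log h1]
  have hE : Real.exp (α*u) * Real.exp (-(α*u)) = 1 := by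
    rw [← Real.exp_add]; simp
  ring_nf
  nlinarith

set_option maxHeartbeats 1000000 in
theorem PhiU_bounds (α : ℝ) (hα : 0 < α) (ψ : ℝ → ℝ)
    (hpos : ∀ u ∈ Set.Ioi (0:ℝ), 0 < ψ u)
    (hC1 : ContDiffOn ℝ 1 ψ (Set.Ioi 0))
    (hneg : ∀ u ∈ Set.Ioi (0:ℝ), deriv ψ u < 0)
    (h0 : Tendsto ψ (nhdsWithin 0 (Set.Ioi 0)) atTop)
    (hinf : Tendsto ψ atTop (nhds 0))
    (C₁ C₂ : ℝ) (hC : C₂ ≤ C₁) (hC₂ : 0 < C₂)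
    (hbound : ∀ u > (0:ℝ),
      C₂ * rhoUInf α u ≤ -deriv ψ u ∧ -deriv ψ u ≤ C₁ * rhoUInf α u)
    (hlimsup : Filter.IsBoundedUnder (· ≤ ·) (nhdsWithin 0 (Set.Ioi 0))
      (fun u => |(-deriv ψ u) - rhoUInf α u|)) :
    ∃ Ct₁ Ct₂ : ℝ, Ct₂ ≤ Ct₁ ∧ 0 < Ct₂ ∧
      ∀ v : ℝ, rhoInf α v Ct₂ ≤ PhiU ψ v ∧ PhiU ψ v ≤ rhoInf α v Ct₁ := by
  have hC₁ : 0 < C₁ := lt_of_lt_of_le hC₂ hC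
  -- differentiability of ψ on Ioi 0
  have hdiff : ∀ u ∈ Set.Ioi (0:ℝ), DifferentiableAt ℝ ψ u := by
    intro u hu
    exact (hC1.differentiableOn one_ne_zero).differentiableAt (isOpen_Ioi.mem_nhds hu)
  have hcontG : ContinuousOn (Gpsi ψ) (Set.Ioi 0) :=
    continuousOn_id.sub hC1.continuousOn
  -- surjectivity of Gpsi onto ℝ
  have hsurj : ∀ v : ℝ, ∃ w ∈ Set.Ioi (0:ℝ), Gpsi ψ w = v := by
    intro v
    have hbot : Tendsto (Gpsi ψ) (nhdsWithin 0 (Set.Ioi 0)) atBot := by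
      have h1 : Tendsto (fun u => ψ u - u) (nhdsWithin 0 (Set.Ioi 0)) atTop := by
        have hneg0 : Tendsto (fun u : ℝ => -u) (nhdsWithin 0 (Set.Ioi 0)) (nhds 0) := by
          have h := (continuous_neg.tendsto (0:ℝ)).mono_left
            (nhdsWithin_le_nhds (s := Set.Ioi 0))
          simpa using h
        exact h0.atTop_add hneg0
      have : Tendsto (fun u => -(ψ u - u)) (nhdsWithin 0 (Set.Ioi 0)) atBot :=
        tendsto_neg_atTop_atBot.comp h1
      refine this.congr (fun u => by simp [Gpsi])
    have htop : Tendsto (Gpsi ψ) atTop atTop := by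
      have hninf : Tendsto (fun u => -ψ u) atTop (nhds 0) := by simpa using hinf.neg
      have : Tendsto (fun u : ℝ => u + -ψ u) atTop atTop := tendsto_id.atTop_add hninf
      exact this.congr (fun u => by simp [Gpsi, sub_eq_add_neg])
    obtain ⟨a, ha, hav⟩ : ∃ a, a ∈ Set.Ioi (0:ℝ) ∧ Gpsi ψ a < v := by
      have := (hbot.eventually (eventually_lt_atBot v)).and self_mem_nhdsWithin
      obtain ⟨a, h1, h2⟩ := this.exists
      exact ⟨a, h2, h1⟩
    obtain ⟨b, hab, hbv⟩ : ∃ b, a ≤ b ∧ v < Gpsi ψ b := by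
      have := (htop.eventually (eventually_gt_atTop v)).and (eventually_ge_atTop a)
      obtain ⟨b, h1, h2⟩ := this.exists
      exact ⟨b, h2, h1⟩
    have hIcc : Set.Icc a b ⊆ Set.Ioi 0 := fun x hx => lt_of_lt_of_le ha hx.1
    have := intermediate_value_Icc hab (hcontG.mono hIcc)
    obtain ⟨w, hw, hweq⟩ := this ⟨le_of_lt hav, le_of_lt hbv⟩
    exact ⟨w, hIcc hw, hweq⟩
  -- ψ ≤ C₁ * ψ∞ on Ioi 0
  have hupper : ∀ u ∈ Set.Ioi (0:ℝ), ψ u ≤ C₁ * psiInf α u := by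
    set g : ℝ → ℝ := fun u => C₁ * psiInf α u - ψ u with hgdef
    have hganti : AntitoneOn g (Set.Ioi 0) := by
      apply antitoneOn_of_deriv_nonpos (convex_Ioi 0)
      · apply ContinuousOn.sub
        · exact continuousOn_const.mul
            (fun u hu => ((psiInf_hasDerivAt hα hu).continuousAt).continuousWithinAt)
        · exact hC1.continuousOn
      · intro x hx
        rw [interior_Ioi] at hx
        exact ((((psiInf_hasDerivAt hα hx).differentiableAt).const_mul C₁).sub
          (hdiff x hx)).differentiableWithinAt
      · intro x hx
        rw [interior_Ioi] at hx
        have hd : HasDerivAt g (C₁ * (-(rhoUInf α x)) - deriv ψ x) x :=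
          ((psiInf_hasDerivAt hα hx).const_mul C₁).sub ((hdiff x hx).hasDerivAt)
        rw [hd.deriv]
        have := (hbound x hx).2
        linarith
    have hgtend : Tendsto g atTop (nhds 0) := by
      have h1 := ((psiInf_tendsto hα).const_mul C₁).sub hinf
      simpa using h1
    intro u hu
    have hev : ∀ᶠ t in atTop, g t ≤ g u := by
      filter_upwards [eventually_ge_atTop u] with t ht
      exact hganti hu (lt_of_lt_of_le hu ht) ht
    have h2 := le_of_tendsto hgtend hev
    simp only [hgdef] at h2
    linarith
  -- global bound on |ψ - ψ∞|
  obtain ⟨B, hB0, hB⟩ : ∃ B : ℝ, 0 ≤ B ∧ ∀ u ∈ Set.Ioi (0:ℝ), |ψ u - psiInf α u| ≤ B := by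
    obtain ⟨M, hM⟩ := hlimsup
    rw [Filter.eventually_map] at hM
    obtain ⟨δ, hδ, hsub⟩ := mem_nhdsGT_iff_exists_Ioo_subset.1 hM
    have hδ0 : (0:ℝ) < δ := hδ
    set M' := max M 0 with hM'def
    have hM'0 : 0 ≤ M' := le_max_right _ _
    set c := δ/2 with hcdef
    have hc0 : 0 < c := by positivity
    have hcδ : c ∈ Set.Ioo (0:ℝ) δ := ⟨hc0, by simp only [hcdef]; linarith⟩
    set h : ℝ → ℝ := fun u => ψ u - psiInf α u with hhdef
    -- MVT bound on Ioo 0 δ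
    have hmvt : ∀ u ∈ Set.Ioo (0:ℝ) δ, |h u - h c| ≤ M' * δ := by
      intro u hu
      have hder : ∀ x ∈ Set.Ioo (0:ℝ) δ,
          HasDerivWithinAt h (deriv ψ x + rhoUInf α x) (Set.Ioo 0 δ) x := by
        intro x hx
        have := ((hdiff x hx.1).hasDerivAt).sub (psiInf_hasDerivAt hα hx.1)
        have h2 : deriv ψ x - -(rhoUInf α x) = deriv ψ x + rhoUInf α x := by ring
        rw [h2] at this
        exact this.hasDerivWithinAt
      have hbd : ∀ x ∈ Set.Ioo (0:ℝ) δ, ‖deriv ψ x + rhoUInf α x‖ ≤ M' := by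
        intro x hx
        have h1 : |(-deriv ψ x) - rhoUInf α x| ≤ M := hsub hx
        have h2 : |deriv ψ x + rhoUInf α x| = |(-deriv ψ x) - rhoUInf α x| := by
          rw [← abs_neg]; congr 1; ring
        rw [Real.norm_eq_abs, h2]
        exact le_trans h1 (le_max_left _ _)
      have := Convex.norm_image_sub_le_of_norm_hasDerivWithin_le hder hbd
        (convex_Ioo 0 δ) hcδ hu
      rw [Real.norm_eq_abs, Real.norm_eq_abs] at this
      have huc : |u - c| ≤ δ := by
        rw [abs_le]
        constructor
        · have := hu.1; simp only [hcdef]; linarith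
        · have := hu.2; simp only [hcdef]; linarith
      calc |h u - h c| ≤ M' * |u - c| := this
        _ ≤ M' * δ := by nlinarith
    refine ⟨(M' * δ + |h c|) + (C₁ + 1) * psiInf α c, ?_, ?_⟩
    · have h1 := psiInf_pos hα hc0
      have h2 := abs_nonneg (h c)
      nlinarith
    intro u hu
    have hu0 : (0:ℝ) < u := hu
    by_cases hcase : u < δ
    · have h1 := hmvt u ⟨hu0, hcase⟩
      have h2 : |h u| ≤ |h u - h c| + |h c| := by
        have := abs_sub_abs_le_abs_sub (h u) (h c)
        linarith
      have h3 := psiInf_pos hα hc0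
      have : |ψ u - psiInf α u| = |h u| := rfl
      rw [this]
      nlinarith
    · push_neg at hcase
      have hcu : c ≤ u := by simp only [hcdef]; linarith
      have h1 := psiInf_pos hα hu0
      have h2 := hpos u hu
      have h3 := hupper u hu
      have h4 : |h u| ≤ (C₁ + 1) * psiInf α u := by
        rw [abs_le]
        constructor
        · simp only [hhdef]; nlinarith
        · simp only [hhdef]; nlinarith
      have h5 : psiInf α u ≤ psiInf α c := psiInf_anti hα hc0 hcu
      have h6 := abs_nonneg (h c)
      have : |ψ u - psiInf α u| = |h u| := rfl
      rw [this]
      nlinarith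
  -- constants
  set K := Real.exp (α * B) with hKdef
  have hK1 : 1 ≤ K := by
    rw [hKdef, show (1:ℝ) = Real.exp 0 by simp]
    exact Real.exp_le_exp.2 (by positivity)
  have hK0 : 0 < K := lt_of_lt_of_le one_pos hK1
  refine ⟨C₁ * K, C₂ / K, ?_, by positivity, ?_⟩
  · calc C₂ / K ≤ C₂ := by
          rw [div_le_iff₀ hK0]; nlinarith
      _ ≤ C₁ := hC
      _ ≤ C₁ * K := by nlinarith
  intro v
  set w := Ginv ψ v with hwdef
  have hwmem : w ∈ Set.Ioi (0:ℝ) := Function.invFunOn_mem (hsurj v)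
  have hweq : w - ψ w = v := Function.invFunOn_eq (hsurj v)
  have hw0 : 0 < w := hwmem
  set r := -deriv ψ w with hrdef
  have hr0 : 0 < r := by simpa [hrdef] using neg_pos.2 (hneg w hwmem)
  have hPhi : PhiU ψ v = r / (1 + r) := by
    rw [PhiU, ← hwdef, ← hrdef]
    ring_nf
    rw [hrdef]; ring
  set E := Real.exp (α * v) with hEdef
  have hE0 : 0 < E := Real.exp_pos _
  set D := Real.exp (α * w) - 1 with hDdef
  have hD0 : 0 < D := aux_expm1_pos hα hw0
  -- the key comparison: E / K ≤ D ≤ E * K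
  have hDeq : D = E * Real.exp (α * (ψ w - psiInf α w)) := by
    rw [hDdef, exp_key hα hw0, hEdef, ← Real.exp_add]
    congr 1
    have : α * v = α * w - α * ψ w := by rw [← hweq]; ring
    rw [this]; ring
  have habs := hB w hwmem
  have hDle : D ≤ E * K := by
    rw [hDeq, hKdef]
    have : Real.exp (α * (ψ w - psiInf α w)) ≤ Real.exp (α * B) := by
      apply Real.exp_le_exp.2
      have := (abs_le.1 habs).2
      nlinarith
    nlinarith
  have hDge : E / K ≤ D := by
    rw [hDeq, hKdef, div_le_iff₀ (Real.exp_pos _), mul_assoc, ← Real.exp_add]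
    have : (1:ℝ) ≤ Real.exp (α * (ψ w - psiInf α w) + α * B) := by
      rw [show (1:ℝ) = Real.exp 0 by simp]
      apply Real.exp_le_exp.2
      have := (abs_le.1 habs).1
      nlinarith
    nlinarith
  -- bounds on r
  have hrB := hbound w hw0
  have hrhoU : rhoUInf α w = 1 / D := by rw [rhoUInf, hDdef]
  have hrlow : C₂ / K / E ≤ r := by
    have h1 : C₂ / K / E ≤ C₂ / D := by
      rw [div_div, div_le_div_iff₀ (by positivity) hD0]
      nlinarith [mul_le_mul_of_nonneg_left hDle (le_of_lt hC₂)]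
    calc C₂ / K / E ≤ C₂ / D := h1
      _ = C₂ * rhoUInf α w := by rw [hrhoU]; ring
      _ ≤ r := hrB.1
  have hrhigh : r ≤ C₁ * K / E := by
    have h1 : C₁ / D ≤ C₁ * K / E := by
      rw [div_le_div_iff₀ hD0 hE0]
      have hEDK : E ≤ D * K := (div_le_iff₀ hK0).1 hDge
      nlinarith [mul_le_mul_of_nonneg_left hEDK (le_of_lt hC₁)]
    calc r ≤ C₁ * rhoUInf α w := hrB.2
      _ = C₁ / D := by rw [hrhoU]; ring
      _ ≤ C₁ * K / E := h1
  constructor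
  · have := ratio_mono (by positivity : (0:ℝ) ≤ C₂ / K / E) hrlow
    calc rhoInf α v (C₂ / K) = (C₂ / K / E) / (1 + C₂ / K / E) := by
          rw [rhoInf, ← hEdef]; exact ratio_eq hE0 (by positivity)
      _ ≤ r / (1 + r) := this
      _ = PhiU ψ v := hPhi.symm
  · have := ratio_mono (le_of_lt hr0) hrhigh
    calc PhiU ψ v = r / (1 + r) := hPhi
      _ ≤ (C₁ * K / E) / (1 + C₁ * K / E) := this
      _ = rhoInf α v (C₁ * K) := by
          rw [rhoInf, ← hEdef]; exact (ratio_eq hE0 (by positivity)).symm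
end

section
/- (Poincaré inequality, uniform case) Fix α > 0 and set ρ_U(u) = 1/(e^{αu} − 1). There exists a constant c > 0 such that for every f ∈ C¹((0,∞)) with ∫_{0}^{∞} f(u)² du < ∞ and ∫_{0}^{∞} f'(u)² / (ρ_U(u)(1 + ρ_U(u))) du < ∞, one has c·∫_{0}^{∞} f(u)² du ≤ ∫_{0}^{∞} f'(u)² / (ρ_U(u)(1 + ρ_U(u))) du; equivalently, c·∫_{0}^{∞} f(u)² du ≤ ∫_{0}^{∞} f'(u)² (e^{αu} − 1)² e^{−αu} du. -/
open Real MeasureTheory Set Filter Topology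

/-- `ρ_U(u) = 1/(e^{αu} - 1)`. -/
noncomputable def rhoU (α u : ℝ) : ℝ := 1 / (Real.exp (α * u) - 1)

theorem weight_bound_aux (t : ℝ) (ht : 0 < t) :
    t^2 ≤ (Real.exp t - 1)^2 * Real.exp (-t) := by
  have h1 : t/2 ≤ Real.sinh (t/2) := Real.self_le_sinh_iff.mpr (by linarith)
  have hkey : (Real.exp t - 1)^2 * Real.exp (-t) = (2 * Real.sinh (t/2))^2 := by
    have e1 : (Real.exp t - 1) * Real.exp (-(t/2)) = Real.exp (t/2) - Real.exp (-(t/2)) := by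
      rw [sub_mul, ← Real.exp_add, one_mul]; ring_nf
    have e2 : Real.exp (-t) = Real.exp (-(t/2)) * Real.exp (-(t/2)) := by
      rw [← Real.exp_add]; ring_nf
    have e3 : 2 * Real.sinh (t/2) = Real.exp (t/2) - Real.exp (-(t/2)) := by
      rw [Real.sinh_eq]; ring
    rw [e3, ← e1, e2]; ring
  rw [hkey]
  have h2 : t ≤ 2 * Real.sinh (t/2) := by linarith
  nlinarith


theorem hardy_aux (f : ℝ → ℝ) (hf : ContDiffOn ℝ 1 f (Set.Ioi 0))
    (hf2 : MeasureTheory.IntegrableOn (fun u => f u ^ 2) (Set.Ioi 0))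
    (hB : MeasureTheory.IntegrableOn (fun u => u^2 * (deriv f u) ^ 2) (Set.Ioi 0)) :
    (∫ u in Set.Ioi (0:ℝ), f u ^ 2) ≤ 4 * ∫ u in Set.Ioi (0:ℝ), u^2 * (deriv f u)^2 := by
  set B := ∫ u in Set.Ioi (0:ℝ), u^2 * (deriv f u)^2 with hBdef
  have hderiv : ∀ x ∈ Set.Ioi (0:ℝ), HasDerivAt f (deriv f x) x := by
    intro x hx
    have : DifferentiableAt ℝ f x :=
      (hf.contDiffAt (isOpen_Ioi.mem_nhds hx)).differentiableAt one_ne_zero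
    exact this.hasDerivAt
  have hcf : ContinuousOn f (Set.Ioi 0) := hf.continuousOn
  have hcd : ContinuousOn (deriv f) (Set.Ioi 0) :=
    hf.continuousOn_deriv_of_isOpen isOpen_Ioi le_rfl
  -- key interval estimate
  have key : ∀ a b : ℝ, 0 < a → a ≤ b →
      ∫ x in a..b, f x ^ 2 ≤ 2 * (b * f b ^ 2) + 4 * B := by
    intro a b ha hab
    have hsub : Set.uIcc a b ⊆ Set.Ioi 0 := by
      rw [Set.uIcc_of_le hab]
      intro x hx; exact lt_of_lt_of_le ha hx.1
    have hsub' : Set.Ioo a b ⊆ Set.Ioi 0 := fun x hx => lt_trans ha hx.1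
    have hcf' : ContinuousOn f (Set.uIcc a b) := hcf.mono hsub
    have hcd' : ContinuousOn (deriv f) (Set.uIcc a b) := hcd.mono hsub
    have ibp : ∫ x in a..b, (1 * f x ^ 2 + x * (2 * f x ^ 1 * deriv f x))
        = b * f b ^ 2 - a * f a ^ 2 := by
      apply intervalIntegral.integral_deriv_mul_eq_sub_of_hasDerivAt
        (u := fun x => x) (v := fun x => f x ^ 2)
      · exact continuousOn_id
      · exact hcf'.pow 2
      · intro x hx; exact hasDerivAt_id' x
      · intro x hx
        rw [min_eq_left hab, max_eq_right hab] at hx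
        exact (hderiv x (hsub' hx)).pow 2
      · exact intervalIntegrable_const
      · apply ContinuousOn.intervalIntegrable
        exact (continuousOn_const.mul (hcf'.pow 1)).mul hcd'
    have int_rhs : IntervalIntegrable
        (fun x => 1 * f x ^ 2 + x * (2 * f x ^ 1 * deriv f x)) volume a b := by
      apply ContinuousOn.intervalIntegrable
      exact (continuousOn_const.mul (hcf'.pow 2)).add
        (continuousOn_id.mul ((continuousOn_const.mul (hcf'.pow 1)).mul hcd'))
    have int_f2 : IntervalIntegrable (fun x => f x ^ 2) volume a b :=
      (hcf'.pow 2).intervalIntegrable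
    have int_xd : IntervalIntegrable (fun x => x ^ 2 * deriv f x ^ 2) volume a b := by
      apply ContinuousOn.intervalIntegrable
      exact (continuousOn_pow 2).mul (hcd'.pow 2)
    have int_lhs : IntervalIntegrable
        (fun x => (1/2) * f x ^ 2 - 2 * (x ^ 2 * deriv f x ^ 2)) volume a b :=
      (int_f2.const_mul _).sub (int_xd.const_mul _)
    have mono : ∫ x in a..b, ((1/2) * f x ^ 2 - 2 * (x ^ 2 * deriv f x ^ 2))
        ≤ ∫ x in a..b, (1 * f x ^ 2 + x * (2 * f x ^ 1 * deriv f x)) := by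
      apply intervalIntegral.integral_mono_on hab int_lhs int_rhs
      intro x hx
      nlinarith [sq_nonneg (x * deriv f x + f x / 2)]
    rw [ibp] at mono
    rw [intervalIntegral.integral_sub (int_f2.const_mul _) (int_xd.const_mul _),
      intervalIntegral.integral_const_mul, intervalIntegral.integral_const_mul] at mono
    -- interval integral of x^2 f'^2 vs B
    have hxd_le : ∫ x in a..b, x ^ 2 * deriv f x ^ 2 ≤ B := by
      rw [intervalIntegral.integral_of_le hab]
      apply MeasureTheory.setIntegral_mono_set hB
      · filter_upwards [MeasureTheory.self_mem_ae_restrict measurableSet_Ioi] with x _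
        positivity
      · apply HasSubset.Subset.eventuallyLE
        intro x hx; exact lt_of_lt_of_le ha hx.1.le
    have hfa : 0 ≤ a * f a ^ 2 := by positivity
    linarith
  -- boundary sequence: for every M ≥ 1 and δ > 0 there is b ≥ M with b * f b ^2 ≤ δ
  have bdry : ∀ M : ℝ, 1 ≤ M → ∀ δ : ℝ, 0 < δ → ∃ b, M ≤ b ∧ b * f b ^ 2 ≤ δ := by
    intro M hM δ hδ
    by_contra hcon
    push_neg at hcon
    have hM0 : (0:ℝ) < M := lt_of_lt_of_le one_pos hM
    have hint : MeasureTheory.IntegrableOn (fun x => δ * x⁻¹) (Set.Ioi M) := by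
      apply MeasureTheory.Integrable.mono'
        (hf2.mono_set (Set.Ioi_subset_Ioi hM0.le))
      · apply ContinuousOn.aestronglyMeasurable _ measurableSet_Ioi
        exact continuousOn_const.mul (continuousOn_inv₀.mono
          (fun x hx => ne_of_gt (lt_trans hM0 hx)))
      · rw [MeasureTheory.ae_restrict_iff' measurableSet_Ioi]
        filter_upwards with x hx
        have hx0 : 0 < x := lt_trans hM0 hx
        have h1 : δ < x * f x ^ 2 := hcon x (le_of_lt hx)
        rw [Real.norm_eq_abs, abs_of_nonneg (by positivity)]
        calc δ * x⁻¹ ≤ (x * f x ^2) * x⁻¹ := by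
              apply mul_le_mul_of_nonneg_right h1.le (by positivity)
          _ = f x ^ 2 := by field_simp
    have hint2 : MeasureTheory.IntegrableOn (fun x => x ^ (-1:ℝ)) (Set.Ioi M) := by
      have := hint.const_mul δ⁻¹
      apply MeasureTheory.Integrable.congr (this)
      filter_upwards [MeasureTheory.ae_restrict_mem measurableSet_Ioi] with x hx
      have hx0 : 0 < x := lt_trans hM0 hx
      rw [Real.rpow_neg_one]
      field_simp
    rw [integrableOn_Ioi_rpow_iff hM0] at hint2
    linarith
  -- exhaustion
  set s : ℕ → Set ℝ := fun n => Set.Ioc (1/(n+1:ℝ)) (n+1:ℝ) with hs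
  have hsm : ∀ n, MeasurableSet (s n) := fun n => measurableSet_Ioc
  have hmono : Monotone s := by
    intro m n hmn
    apply Set.Ioc_subset_Ioc
    · apply one_div_le_one_div_of_le (by positivity)
      exact_mod_cast by exact_mod_cast add_le_add_left (Nat.cast_le.mpr hmn) 1
    · exact_mod_cast add_le_add_left (Nat.cast_le.mpr hmn) 1
  have hunion : (⋃ n, s n) = Set.Ioi 0 := by
    ext x
    simp only [Set.mem_iUnion, hs, Set.mem_Ioc, Set.mem_Ioi]
    constructor
    · rintro ⟨n, h1, _⟩; exact lt_trans (by positivity) h1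
    · intro hx
      obtain ⟨n, hn⟩ := exists_nat_ge (max x x⁻¹)
      refine ⟨n, ?_, ?_⟩
      · rw [div_lt_iff₀ (show (0:ℝ) < n+1 by positivity)]
        have hinv : x⁻¹ ≤ n := le_trans (le_max_right _ _) hn
        have h2 : x * x⁻¹ = 1 := mul_inv_cancel₀ (ne_of_gt hx)
        nlinarith [mul_le_mul_of_nonneg_left hinv hx.le]
      · calc x ≤ n := le_trans (le_max_left _ _) hn
          _ ≤ n + 1 := by linarith
  have htend : Tendsto (fun n => ∫ x in s n, f x ^ 2) atTop
      (𝓝 (∫ x in Set.Ioi (0:ℝ), f x ^ 2)) := by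
    have := MeasureTheory.tendsto_setIntegral_of_monotone hsm hmono
      (by rw [hunion]; exact hf2)
    rwa [hunion] at this
  have hbound : ∀ n : ℕ, ∫ x in s n, f x ^ 2 ≤ 4 * B := by
    intro n
    apply le_of_forall_pos_le_add
    intro δ hδ
    obtain ⟨b, hbM, hbf⟩ := bdry (n+1:ℝ) (by linarith [Nat.cast_nonneg (α := ℝ) n] : (1:ℝ) ≤ n+1) (δ/2) (by linarith)
    have ha : (0:ℝ) < 1/(n+1:ℝ) := by positivity
    have hab : 1/(n+1:ℝ) ≤ b := by
      calc 1/(n+1:ℝ) ≤ 1 := by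
            rw [div_le_one (by positivity)]; exact_mod_cast by linarith [Nat.cast_nonneg (α := ℝ) n]
        _ ≤ n+1 := by linarith [Nat.cast_nonneg (α := ℝ) n]
        _ ≤ b := hbM
    have step1 : ∫ x in s n, f x ^ 2 ≤ ∫ x in Set.Ioc (1/(n+1:ℝ)) b, f x ^ 2 := by
      apply MeasureTheory.setIntegral_mono_set
        (hf2.mono_set (fun x hx => lt_trans ha hx.1))
      · filter_upwards [MeasureTheory.self_mem_ae_restrict measurableSet_Ioc] with x _
        positivity
      · apply HasSubset.Subset.eventuallyLE
        exact Set.Ioc_subset_Ioc le_rfl hbM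
    have step2 : ∫ x in Set.Ioc (1/(n+1:ℝ)) b, f x ^ 2 ≤ 2 * (b * f b ^2) + 4 * B := by
      rw [← intervalIntegral.integral_of_le hab]
      exact key _ _ ha hab
    linarith
  exact le_of_tendsto htend (Filter.Eventually.of_forall hbound)

theorem poincare_inequality_U (α : ℝ) (hα : 0 < α) :
    ∃ c > (0:ℝ), ∀ f : ℝ → ℝ,
      ContDiffOn ℝ 1 f (Set.Ioi 0) →
      MeasureTheory.IntegrableOn (fun u => f u ^ 2) (Set.Ioi 0) →
      MeasureTheory.IntegrableOn
        (fun u => (deriv f u) ^ 2 / (rhoU α u * (1 + rhoU α u))) (Set.Ioi 0) →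
      (c * ∫ u in Set.Ioi (0:ℝ), f u ^ 2)
          ≤ (∫ u in Set.Ioi (0:ℝ), (deriv f u) ^ 2 / (rhoU α u * (1 + rhoU α u))) ∧
      (c * ∫ u in Set.Ioi (0:ℝ), f u ^ 2)
          ≤ ∫ u in Set.Ioi (0:ℝ),
              (deriv f u) ^ 2 * (Real.exp (α * u) - 1) ^ 2 * Real.exp (-(α * u)) := by
  refine ⟨α^2/4, by positivity, ?_⟩
  intro f hf hf2 hfI
  have hcd : ContinuousOn (deriv f) (Set.Ioi 0) :=
    hf.continuousOn_deriv_of_isOpen isOpen_Ioi le_rfl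
  -- the two integrands agree on Ioi 0
  have heq : Set.EqOn (fun u => (deriv f u) ^ 2 / (rhoU α u * (1 + rhoU α u)))
      (fun u => (deriv f u) ^ 2 * (Real.exp (α * u) - 1) ^ 2 * Real.exp (-(α * u)))
      (Set.Ioi 0) := by
    intro u hu
    have hu0 : (0:ℝ) < u := hu
    have hE : 1 < Real.exp (α * u) := by
      rw [show (1:ℝ) = Real.exp 0 from (Real.exp_zero).symm]
      exact Real.exp_lt_exp.mpr (by positivity)
    have hd : Real.exp (α * u) - 1 ≠ 0 := by
      have := hE; intro h; nlinarith
    have hE0 : Real.exp (α * u) ≠ 0 := (Real.exp_pos _).ne'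
    simp only [rhoU]
    rw [Real.exp_neg]
    field_simp
    ring
  have hwint : MeasureTheory.IntegrableOn
      (fun u => (deriv f u) ^ 2 * (Real.exp (α * u) - 1) ^ 2 * Real.exp (-(α * u)))
      (Set.Ioi 0) := hfI.congr_fun heq measurableSet_Ioi
  -- weight bound pointwise
  have hwb : ∀ u ∈ Set.Ioi (0:ℝ),
      α^2 * (u^2 * (deriv f u)^2)
        ≤ (deriv f u) ^ 2 * (Real.exp (α * u) - 1) ^ 2 * Real.exp (-(α * u)) := by
    intro u hu
    have h1 : (α*u)^2 ≤ (Real.exp (α*u) - 1)^2 * Real.exp (-(α*u)) :=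
      weight_bound_aux (α*u) (by exact mul_pos hα hu)
    nlinarith [sq_nonneg (deriv f u), mul_le_mul_of_nonneg_left h1 (sq_nonneg (deriv f u))]
  -- integrability of u^2 * f'(u)^2
  have hBint : MeasureTheory.IntegrableOn (fun u => u^2 * (deriv f u)^2) (Set.Ioi 0) := by
    apply MeasureTheory.Integrable.mono' (hwint.const_mul ((α^2)⁻¹))
    · exact ((continuousOn_pow 2).mul (hcd.pow 2)).aestronglyMeasurable measurableSet_Ioi
    · rw [MeasureTheory.ae_restrict_iff' measurableSet_Ioi]
      filter_upwards with u hu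
      have h1 := hwb u hu
      have hu0 : (0:ℝ) < u := hu
      rw [Real.norm_eq_abs, abs_of_nonneg (by positivity)]
      rw [le_inv_mul_iff₀ (by positivity : (0:ℝ) < α^2)]
      linarith
  have hardy := hardy_aux f hf hf2 hBint
  set A := ∫ u in Set.Ioi (0:ℝ), f u ^ 2
  set B := ∫ u in Set.Ioi (0:ℝ), u^2 * (deriv f u)^2
  have hIeq : (∫ u in Set.Ioi (0:ℝ), (deriv f u) ^ 2 / (rhoU α u * (1 + rhoU α u)))
      = ∫ u in Set.Ioi (0:ℝ),
          (deriv f u) ^ 2 * (Real.exp (α * u) - 1) ^ 2 * Real.exp (-(α * u)) :=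
    MeasureTheory.setIntegral_congr_fun measurableSet_Ioi heq
  have hBle : α^2 * B ≤ ∫ u in Set.Ioi (0:ℝ),
      (deriv f u) ^ 2 * (Real.exp (α * u) - 1) ^ 2 * Real.exp (-(α * u)) := by
    rw [show α^2 * B = ∫ u in Set.Ioi (0:ℝ), α^2 * (u^2 * (deriv f u)^2) from
      (MeasureTheory.integral_const_mul _ _).symm]
    exact MeasureTheory.setIntegral_mono_on (hBint.const_mul _) hwint measurableSet_Ioi hwb
  have hfin : α^2/4 * A ≤ ∫ u in Set.Ioi (0:ℝ),
      (deriv f u) ^ 2 * (Real.exp (α * u) - 1) ^ 2 * Real.exp (-(α * u)) := by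
    have h4 : α^2/4 * A ≤ α^2/4 * (4*B) :=
      mul_le_mul_of_nonneg_left hardy (by positivity)
    nlinarith
  exact ⟨by rw [hIeq]; exact hfin, hfin⟩
end

section
/- (Poincaré inequality, restricted uniform case) Fix β > 0 and set ρ_R(u) = 1/(e^{βu} + 1). There exists a constant c > 0 such that for every f ∈ C¹([0,∞)) with f'(0) = 0, ∫_{0}^{∞} f(u)² du < ∞ and ∫_{0}^{∞} f'(u)² / (ρ_R(u)(1 − ρ_R(u))) du < ∞, one has c·∫_{0}^{∞} f(u)² du ≤ ∫_{0}^{∞} f'(u)² / (ρ_R(u)(1 − ρ_R(u))) du; equivalently, c·∫_{0}^{∞} f(u)² du ≤ ∫_{0}^{∞} f'(u)² (e^{βu} + 1)² e^{−βu} du. -/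
open Real MeasureTheory Set Filter

noncomputable def rhoR (β u : ℝ) : ℝ := 1 / (Real.exp (β * u) + 1)

/-- the weight identity -/
lemma weight_eq (β u x : ℝ) :
    x / (rhoR β u * (1 - rhoR β u)) = x * (Real.exp (β * u) + 1) ^ 2 * Real.exp (-(β * u)) := by
  have hE : (0:ℝ) < Real.exp (β * u) := Real.exp_pos _
  have h1 : Real.exp (β * u) + 1 ≠ 0 := by positivity
  rw [Real.exp_neg]
  unfold rhoR
  field_simp
  ring

/-- AM-GM trick -/
lemma amgm_sq {A B y : ℝ} (hA : 0 ≤ A) (hB : 0 < B) (hy : 0 ≤ y)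
    (h : ∀ l > (0:ℝ), y ≤ (l * A + B / l) / 2) : y ^ 2 ≤ A * B := by
  rcases eq_or_lt_of_le hA with hA0 | hA0
  · -- A = 0 : y ≤ B/(2l) for all l, so y = 0
    have hy0 : y = 0 := by
      by_contra hne
      have hyp : 0 < y := lt_of_le_of_ne hy (Ne.symm hne)
      have := h (B / y) (by positivity)
      rw [← hA0] at this
      have hBy : B / (B / y) = y := by field_simp
      nlinarith
    simp [hy0, ← hA0]
  · have hl : 0 < Real.sqrt (B / A) := Real.sqrt_pos.2 (by positivity)
    have := h _ hl
    have hs : Real.sqrt (B / A) ^ 2 = B / A := Real.sq_sqrt (by positivity)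
    have key : y ≤ Real.sqrt (A * B) := by
      have hsab : Real.sqrt (B/A) * A = Real.sqrt (A * B) := by
        rw [← Real.sqrt_sq hA0.le, ← Real.sqrt_mul (by positivity)]
        congr 1; field_simp; ring
        rw [Real.sq_sqrt (by positivity)]
      have hsab2 : B / Real.sqrt (B/A) = Real.sqrt (A * B) := by
        rw [div_eq_iff hl.ne', ← hsab]
        have : Real.sqrt (B/A) * A * Real.sqrt (B/A) = (B/A) * A := by
          calc Real.sqrt (B/A) * A * Real.sqrt (B/A) = Real.sqrt (B/A) ^ 2 * A := by ring
            _ = (B/A) * A := by rw [hs]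
        rw [this, div_mul_cancel₀ B hA0.ne']
      calc y ≤ (Real.sqrt (B/A) * A + B / Real.sqrt (B/A)) / 2 := this
        _ = Real.sqrt (A * B) := by rw [hsab, hsab2]; ring
    calc y ^ 2 ≤ Real.sqrt (A*B) ^ 2 := by nlinarith [Real.sqrt_nonneg (A*B)]
      _ = A * B := Real.sq_sqrt (by positivity)

/-- tail integral of exponential -/
lemma exp_tail {β : ℝ} (hβ : 0 < β) (u : ℝ) :
    ∫ t in Ioi u, Real.exp (-(β * t)) = Real.exp (-(β * u)) / β := by
  have h : ∀ x ∈ Ici u, HasDerivAt (fun t => -Real.exp (-(β * t)) / β) (Real.exp (-(β * x))) x := by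
    intro x _
    have : HasDerivAt (fun t => -(β * t)) (-β) x := by
      have h := ((hasDerivAt_id x).const_mul β).neg; simp only [id_eq, mul_one] at h; exact h
    have := (Real.hasDerivAt_exp _).comp x this
    have h2 := (this.neg).div_const β
    refine h2.congr_deriv ?_
    field_simp
  have htend : Tendsto (fun t => -Real.exp (-(β * t)) / β) atTop (nhds 0) := by
    have : Tendsto (fun t : ℝ => -(β * t)) atTop atBot := by
      apply tendsto_neg_atBot_iff.mpr
      exact Tendsto.const_mul_atTop hβ tendsto_id
    have := (Real.tendsto_exp_atBot.comp this).neg.div_const β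
    simpa using this
  have := MeasureTheory.integral_Ioi_of_hasDerivAt_of_tendsto' h
    ((exp_neg_integrableOn_Ioi u hβ).congr_fun (fun x _ => by simp only [neg_mul]) measurableSet_Ioi) htend
  rw [this]; field_simp; ring

/-- pointwise AM-GM -/
lemma amgm_pt {a l s : ℝ} (_ha : 0 ≤ a) (hl : 0 < l) (hs : 0 < s) :
    a ≤ (l * (a ^ 2 * s) + s⁻¹ / l) / 2 := by
  have h : (l * (a ^ 2 * s) + s⁻¹ / l) / 2 - a = (l * a * s - 1) ^ 2 / (2 * l * s) := by
    field_simp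
    ring
  have h2 := div_nonneg (sq_nonneg (l * a * s - 1)) (by positivity : (0:ℝ) ≤ 2 * l * s)
  linarith

theorem poincare_inequality_R (β : ℝ) (hβ : 0 < β) :
    ∃ c > (0:ℝ), ∀ f : ℝ → ℝ,
      ContDiffOn ℝ 1 f (Set.Ici 0) →
      derivWithin f (Set.Ici 0) 0 = 0 →
      MeasureTheory.IntegrableOn (fun u => f u ^ 2) (Set.Ioi 0) →
      MeasureTheory.IntegrableOn
        (fun u => (deriv f u) ^ 2 / (rhoR β u * (1 - rhoR β u))) (Set.Ioi 0) →
      (c * ∫ u in Set.Ioi (0:ℝ), f u ^ 2)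
          ≤ (∫ u in Set.Ioi (0:ℝ), (deriv f u) ^ 2 / (rhoR β u * (1 - rhoR β u))) ∧
      (c * ∫ u in Set.Ioi (0:ℝ), f u ^ 2)
          ≤ ∫ u in Set.Ioi (0:ℝ),
              (deriv f u) ^ 2 * (Real.exp (β * u) + 1) ^ 2 * Real.exp (-(β * u)) := by
  refine ⟨β ^ 2, by positivity, ?_⟩
  intro f hf _hf0 hf2 hint
  have hfun : (fun u => (deriv f u) ^ 2 / (rhoR β u * (1 - rhoR β u)))
      = (fun u => (deriv f u) ^ 2 * (Real.exp (β * u) + 1) ^ 2 * Real.exp (-(β * u))) := by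
    funext u; exact weight_eq β u _
  suffices h : β ^ 2 * (∫ u in Set.Ioi (0:ℝ), f u ^ 2)
      ≤ ∫ u in Set.Ioi (0:ℝ), (deriv f u) ^ 2 / (rhoR β u * (1 - rhoR β u)) by
    exact ⟨h, by rw [← hfun]; exact h⟩
  set D := ∫ u in Set.Ioi (0:ℝ), (deriv f u) ^ 2 / (rhoR β u * (1 - rhoR β u)) with hDdef
  -- basic facts about the weight
  have hint_nonneg : ∀ u, 0 ≤ (deriv f u) ^ 2 / (rhoR β u * (1 - rhoR β u)) := by
    intro u
    rw [weight_eq]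
    positivity
  -- derivative facts
  have hdiff : ∀ u : ℝ, 0 < u → HasDerivAt f (deriv f u) u := fun u hu =>
    (((hf.differentiableOn one_ne_zero) u (le_of_lt hu)).differentiableAt
      (Ici_mem_nhds hu)).hasDerivAt
  have hderiv_eq : ∀ u : ℝ, 0 < u → derivWithin f (Set.Ici 0) u = deriv f u := fun u hu =>
    derivWithin_of_mem_nhds (Ici_mem_nhds hu)
  have hcont : ContinuousOn (deriv f) (Set.Ioi 0) := by
    have h1 : ContinuousOn (derivWithin f (Set.Ici 0)) (Set.Ici 0) :=
      hf.continuousOn_derivWithin (uniqueDiffOn_Ici 0) le_rfl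
    exact (h1.mono Ioi_subset_Ici_self).congr fun u hu => (hderiv_eq u hu).symm
  -- the exp-weighted energy
  have hWle : ∀ u : ℝ, (deriv f u) ^ 2 * Real.exp (β * u)
      ≤ (deriv f u) ^ 2 / (rhoR β u * (1 - rhoR β u)) := by
    intro u
    rw [weight_eq]
    have hE := Real.exp_pos (β * u)
    have h2 : Real.exp (β * u) ^ 2 * Real.exp (-(β * u)) = Real.exp (β * u) := by
      rw [Real.exp_neg]; field_simp
    have h3 : Real.exp (β * u) ≤ (Real.exp (β * u) + 1) ^ 2 * Real.exp (-(β * u)) := by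
      nlinarith [Real.exp_pos (-(β * u)), h2]
    calc (deriv f u) ^ 2 * Real.exp (β * u)
        ≤ (deriv f u) ^ 2 * ((Real.exp (β * u) + 1) ^ 2 * Real.exp (-(β * u))) :=
          mul_le_mul_of_nonneg_left h3 (sq_nonneg _)
      _ = (deriv f u) ^ 2 * (Real.exp (β * u) + 1) ^ 2 * Real.exp (-(β * u)) := by ring
  have hD'int : IntegrableOn (fun u => (deriv f u) ^ 2 * Real.exp (β * u)) (Set.Ioi 0) := by
    apply hint.mono'
    · exact (((hcont.pow 2).mul (Real.continuous_exp.comp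
        (continuous_const.mul continuous_id)).continuousOn).aestronglyMeasurable
        measurableSet_Ioi)
    · filter_upwards [ae_restrict_mem measurableSet_Ioi] with u _
      rw [Real.norm_eq_abs, abs_of_nonneg (by positivity)]
      exact hWle u
  set D' := ∫ u in Set.Ioi (0:ℝ), (deriv f u) ^ 2 * Real.exp (β * u) with hD'def
  have hD'0 : 0 ≤ D' := setIntegral_nonneg measurableSet_Ioi fun u _ => by positivity
  have hD'D : D' ≤ D :=
    setIntegral_mono_on hD'int hint measurableSet_Ioi fun u _ => hWle u
  -- key estimate
  have key : ∀ u x : ℝ, 0 < u → u ≤ x → ∀ l > (0:ℝ),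
      |f u - f x| ≤ (l * D' + (Real.exp (-(β * u)) / β) / l) / 2 := by
    intro u x hu hux l hl
    have hsub : Set.Icc u x ⊆ Set.Ioi 0 := fun t ht => lt_of_lt_of_le hu ht.1
    have hcont' : ContinuousOn (deriv f) (Set.Icc u x) := hcont.mono hsub
    have hftc : f x - f u = ∫ t in u..x, deriv f t := by
      refine (intervalIntegral.integral_eq_sub_of_hasDerivAt ?_ ?_).symm
      · intro t ht; rw [uIcc_of_le hux] at ht; exact hdiff t (lt_of_lt_of_le hu ht.1)
      · apply ContinuousOn.intervalIntegrable; rwa [uIcc_of_le hux]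
    have hint1 : (∫ t in u..x, (deriv f t) ^ 2 * Real.exp (β * t)) ≤ D' := by
      rw [intervalIntegral.integral_of_le hux]
      apply setIntegral_mono_set hD'int (ae_of_all _ fun t => by positivity)
      exact HasSubset.Subset.eventuallyLE fun t ht => lt_of_lt_of_le hu ht.1.le
    have htail : IntegrableOn (fun t => Real.exp (-(β * t))) (Set.Ioi u) :=
      (exp_neg_integrableOn_Ioi u hβ).congr_fun (fun t _ => by simp only [neg_mul]) measurableSet_Ioi
    have hint2 : (∫ t in u..x, Real.exp (-(β * t))) ≤ Real.exp (-(β * u)) / β := by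
      rw [intervalIntegral.integral_of_le hux, ← exp_tail hβ u]
      apply setIntegral_mono_set htail (ae_of_all _ fun t => (Real.exp_pos _).le)
      exact HasSubset.Subset.eventuallyLE Set.Ioc_subset_Ioi_self
    have hci1 : IntervalIntegrable (fun t => |deriv f t|) volume u x := by
      apply ContinuousOn.intervalIntegrable; rw [uIcc_of_le hux]; exact hcont'.abs
    have hci2 : IntervalIntegrable
        (fun t => (l * ((deriv f t) ^ 2 * Real.exp (β * t)) + Real.exp (-(β * t)) / l) / 2)
        volume u x := by
      apply ContinuousOn.intervalIntegrable
      rw [uIcc_of_le hux]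
      apply ContinuousOn.div_const
      apply ContinuousOn.add
      · exact ((hcont'.pow 2).mul ((Real.continuous_exp.comp
          (continuous_const.mul continuous_id)).continuousOn)).const_smul l
      · exact ((Real.continuous_exp.comp
          ((continuous_const.mul continuous_id).neg)).continuousOn).div_const l
    have hbound : (∫ t in u..x, |deriv f t|)
        ≤ (l * D' + (Real.exp (-(β * u)) / β) / l) / 2 := by
      calc (∫ t in u..x, |deriv f t|)
          ≤ ∫ t in u..x,
              (l * ((deriv f t) ^ 2 * Real.exp (β * t)) + Real.exp (-(β * t)) / l) / 2 := by
            apply intervalIntegral.integral_mono_on hux hci1 hci2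
            intro t _
            have := amgm_pt (abs_nonneg (deriv f t)) hl (Real.exp_pos (β * t))
            rw [sq_abs] at this
            rw [Real.exp_neg]
            exact this
        _ = (l * (∫ t in u..x, (deriv f t) ^ 2 * Real.exp (β * t))
              + (∫ t in u..x, Real.exp (-(β * t))) / l) / 2 := by
            rw [intervalIntegral.integral_div, intervalIntegral.integral_add,
              intervalIntegral.integral_const_mul, intervalIntegral.integral_div]
            · apply ContinuousOn.intervalIntegrable
              rw [uIcc_of_le hux]
              exact ((hcont'.pow 2).mul ((Real.continuous_exp.comp
                (continuous_const.mul continuous_id)).continuousOn)).const_smul l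
            · apply ContinuousOn.intervalIntegrable
              rw [uIcc_of_le hux]
              exact ((Real.continuous_exp.comp
                ((continuous_const.mul continuous_id).neg)).continuousOn).div_const l
        _ ≤ (l * D' + (Real.exp (-(β * u)) / β) / l) / 2 := by gcongr
    calc |f u - f x| = |∫ t in u..x, deriv f t| := by rw [← hftc, abs_sub_comm]
      _ ≤ ∫ t in u..x, |deriv f t| := intervalIntegral.abs_integral_le_integral_abs hux
      _ ≤ _ := hbound
  -- f gets small along a sequence
  have hsmall : ∀ ε > (0:ℝ), ∀ M : ℝ, ∃ x, 0 < x ∧ M ≤ x ∧ |f x| < ε := by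
    intro ε hε M
    by_contra hcon
    push_neg at hcon
    set M' := max M 1 with hM'
    have hM'1 : (1:ℝ) ≤ M' := le_max_right M 1
    have h1 : IntegrableOn (fun _ : ℝ => ε ^ 2) (Set.Ioi M') := by
      apply Integrable.mono (hf2.mono_set (Set.Ioi_subset_Ioi (by linarith)))
        aestronglyMeasurable_const
      filter_upwards [ae_restrict_mem measurableSet_Ioi] with x hx
      have hx1 : 0 < x := lt_of_le_of_lt (by linarith : (0:ℝ) ≤ M') hx
      have hεx : ε ≤ |f x| := hcon x hx1 (le_trans (le_max_left M 1) hx.le)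
      rw [Real.norm_eq_abs, Real.norm_eq_abs, abs_of_nonneg (by positivity : (0:ℝ) ≤ ε ^ 2),
        abs_of_nonneg (sq_nonneg (f x)), ← sq_abs (f x)]
      nlinarith [abs_nonneg (f x)]
    rcases integrable_const_iff.mp h1 with h | h
    · exact absurd h (by positivity)
    · rw [isFiniteMeasure_restrict, Real.volume_Ioi] at h
      exact absurd h (by simp)
  -- pointwise decay bound
  have hpoint : ∀ u : ℝ, 0 < u → f u ^ 2 ≤ D' * (Real.exp (-(β * u)) / β) := by
    intro u hu
    have habs : ∀ l > (0:ℝ), |f u| ≤ (l * D' + (Real.exp (-(β * u)) / β) / l) / 2 := by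
      intro l hl
      apply le_of_forall_pos_le_add
      intro ε hε
      obtain ⟨x, _, hux, hfx⟩ := hsmall ε hε u
      calc |f u| ≤ |f u - f x| + |f x| := by
            have := abs_add_le (f u - f x) (f x); simpa using this
        _ ≤ (l * D' + (Real.exp (-(β * u)) / β) / l) / 2 + ε :=
            add_le_add (key u x hu hux l hl) hfx.le
    rw [← sq_abs]
    exact amgm_sq hD'0 (by positivity) (abs_nonneg _) habs
  -- integrate the pointwise bound
  have hrhs_int : IntegrableOn (fun u => D' * (Real.exp (-(β * u)) / β)) (Set.Ioi 0) := by
    apply Integrable.const_mul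
    apply Integrable.div_const
    exact (exp_neg_integrableOn_Ioi 0 hβ).congr_fun (fun t _ => by simp only [neg_mul]) measurableSet_Ioi
  have hfinal : (∫ u in Set.Ioi (0:ℝ), f u ^ 2) ≤ D' / β ^ 2 := by
    calc (∫ u in Set.Ioi (0:ℝ), f u ^ 2)
        ≤ ∫ u in Set.Ioi (0:ℝ), D' * (Real.exp (-(β * u)) / β) :=
          setIntegral_mono_on hf2 hrhs_int measurableSet_Ioi fun u hu => hpoint u hu
      _ = D' * ((∫ u in Set.Ioi (0:ℝ), Real.exp (-(β * u))) / β) := by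
          rw [MeasureTheory.integral_const_mul, MeasureTheory.integral_div]
      _ = D' / β ^ 2 := by
          rw [exp_tail hβ 0]
          rw [show (-(β * (0:ℝ))) = 0 by ring, Real.exp_zero, one_div,
            show β⁻¹ / β = (β ^ 2)⁻¹ by rw [sq, mul_inv]; rfl, div_eq_mul_inv]
  have hβ2 : (0:ℝ) < β ^ 2 := by positivity
  calc β ^ 2 * (∫ u in Set.Ioi (0:ℝ), f u ^ 2) ≤ β ^ 2 * (D' / β ^ 2) := by
        apply mul_le_mul_of_nonneg_left hfinal hβ2.le
    _ = D' := by field_simp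
    _ ≤ D := hD'D
end
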